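/- In the setting of the piecewise-affine conjugation φ sending x_n to n, for every generator g ∈ 𝒢 and every x ∈ ℝ, the conjugated map ρ(g) = φ∘g∘φ⁻¹ satisfies x - 2 ≤ ρ(g)(x) ≤ x + 2. -/
import Mathlib


open Set Filter
open scoped Topology

noncomputable section

/-- After the piecewise-affine conjugation `φ` sending `x_n` to `n`, every generator
`g ∈ 𝒢` satisfies `t - 2 ≤ ρ(g)(t) ≤ t + 2`, where `ρ(g) = φ ∘ g ∘ φ⁻¹`. -/
theorem conjugated_generators_bounded_displacement
    (S : Finset (ℝ ≃ₜ ℝ)) (hne : S.Nonempty)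
    (hmono : ∀ g ∈ S, Monotone ⇑g) (K : ℝ) (hK : 1 ≤ K)
    (hbil : ∀ g ∈ S, ∀ x y : ℝ, K⁻¹ * |y - x| ≤ |g y - g x| ∧ |g y - g x| ≤ K * |y - x|)
    (hsym : ∀ g ∈ S, g.symm ∈ S)
    (hnofix : ∀ p : ℝ, ∃ g ∈ S, g p ≠ p)
    (x : ℤ → ℝ) (hx0 : x 0 = 0)
    (hxrec : ∀ n : ℤ, IsGreatest {y : ℝ | ∃ g ∈ S, y = g (x n)} (x (n + 1)))
    (φ : ℝ ≃ₜ ℝ)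
    (hφ : ∀ n : ℤ, ∀ t ∈ Icc (x n) (x (n + 1)),
      φ t = (n : ℝ) + (t - x n) / (x (n + 1) - x n))
    :
    ∀ g ∈ S, ∀ t : ℝ,
      t - 2 ≤ φ (g (φ.symm t)) ∧ φ (g (φ.symm t)) ≤ t + 2 := by
  -- every generator moves x m by at most one step
  have hg_le : ∀ g ∈ S, ∀ m : ℤ, g (x m) ≤ x (m + 1) := fun g hg m =>
    (hxrec m).2 ⟨g, hg, rfl⟩
  have hg_ge : ∀ g ∈ S, ∀ m : ℤ, x (m - 1) ≤ g (x m) := by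
    intro g hg m
    have h1 : g.symm (x (m - 1)) ≤ x (m - 1 + 1) := hg_le g.symm (hsym g hg) (m - 1)
    rw [sub_add_cancel] at h1
    have h2 := hmono g hg h1
    simpa using h2
  -- the sequence is strictly increasing
  have hstep : ∀ n : ℤ, x n < x (n + 1) := by
    intro n
    obtain ⟨g, hg, hgne⟩ := hnofix (x n)
    rcases lt_or_gt_of_ne hgne with h | h
    · have hsm : StrictMono ⇑g.symm :=
        (hmono g.symm (hsym g hg)).strictMono_of_injective g.symm.injective
      have h2 : x n < g.symm (x n) := by
        have := hsm h
        simpa using this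
      exact lt_of_lt_of_le h2 ((hxrec n).2 ⟨g.symm, hsym g hg, rfl⟩)
    · exact lt_of_lt_of_le h ((hxrec n).2 ⟨g, hg, rfl⟩)
  have hxmono : StrictMono x := strictMono_int_of_lt_succ hstep
  -- value of φ on each interval
  have hφIcc : ∀ m : ℤ, ∀ u ∈ Icc (x m) (x (m + 1)), (m : ℝ) ≤ φ u ∧ φ u ≤ (m : ℝ) + 1 := by
    intro m u hu
    have hd : (0 : ℝ) < x (m + 1) - x m := sub_pos.2 (hstep m)
    rw [hφ m u hu]
    constructor
    · have h1 : (0 : ℝ) ≤ (u - x m) / (x (m + 1) - x m) :=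
        div_nonneg (sub_nonneg.2 hu.1) hd.le
      linarith
    · have h1 : (u - x m) / (x (m + 1) - x m) ≤ 1 :=
        (div_le_one hd).2 (by linarith [hu.2])
      linarith
  -- no common "≤-fixed" point
  have hfixpt : ∀ L : ℝ, (∀ g ∈ S, g L ≤ L) → False := by
    intro L hle
    obtain ⟨g, hg, hne'⟩ := hnofix L
    have h1 : L ≤ g L := by
      have h2 := hle g.symm (hsym g hg)
      have h3 := hmono g hg h2
      simpa using h3
    exact hne' (le_antisymm (hle g hg) h1)
  -- unboundedness above
  have hub : ∀ M : ℝ, ∃ n : ℤ, M < x n := by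
    by_contra h
    push_neg at h
    obtain ⟨M, hM⟩ := h
    set a : ℕ → ℝ := fun n => x n with ha
    have hamono : Monotone a := fun i j hij => hxmono.monotone (by exact_mod_cast hij)
    have hbdd : BddAbove (Set.range a) := ⟨M, by rintro _ ⟨n, rfl⟩; exact hM n⟩
    have htend : Tendsto a atTop (𝓝 (⨆ n, a n)) := tendsto_atTop_ciSup hamono hbdd
    set L := ⨆ n, a n with hL
    apply hfixpt L
    intro g hg
    have h1 : Tendsto (fun n => g (a n)) atTop (𝓝 (g L)) :=
      (g.continuous.tendsto L).comp htend
    have h2 : Tendsto (fun n => a (n + 1)) atTop (𝓝 L) :=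
      htend.comp (tendsto_add_atTop_nat 1)
    refine le_of_tendsto_of_tendsto h1 h2 ?_
    filter_upwards with n
    have h3 := hg_le g hg (n : ℤ)
    have h4 : ((n : ℤ) + 1 : ℤ) = ((n + 1 : ℕ) : ℤ) := by push_cast; ring
    rw [h4] at h3
    exact h3
  -- unboundedness below
  have hlb : ∀ M : ℝ, ∃ n : ℤ, x n < M := by
    by_contra h
    push_neg at h
    obtain ⟨M, hM⟩ := h
    set b : ℕ → ℝ := fun n => x (-(n : ℤ)) with hb
    have hbanti : Antitone b := by
      intro i j hij
      exact hxmono.monotone (by exact_mod_cast neg_le_neg (Int.ofNat_le.2 hij))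
    have hbdd : BddBelow (Set.range b) := ⟨M, by rintro _ ⟨n, rfl⟩; exact hM _⟩
    have htend : Tendsto b atTop (𝓝 (⨅ n, b n)) := tendsto_atTop_ciInf hbanti hbdd
    set L := ⨅ n, b n with hL
    apply hfixpt L
    intro g hg
    have h1 : Tendsto (fun n => g (b (n + 1))) atTop (𝓝 (g L)) :=
      (g.continuous.tendsto L).comp (htend.comp (tendsto_add_atTop_nat 1))
    refine le_of_tendsto_of_tendsto h1 htend ?_
    filter_upwards with n
    have h3 := hg_le g hg (-((n + 1 : ℕ) : ℤ))
    have h4 : (-((n + 1 : ℕ) : ℤ) + 1 : ℤ) = -(n : ℤ) := by push_cast; ring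
    rw [h4] at h3
    exact h3
  -- covering of ℝ by the intervals
  have hcov : ∀ s : ℝ, ∃ n : ℤ, x n ≤ s ∧ s < x (n + 1) := by
    intro s
    obtain ⟨n₀, hn₀⟩ := hlb s
    obtain ⟨n₁, hn₁⟩ := hub s
    have hbddset : ∀ z : ℤ, x z ≤ s → z ≤ n₁ := by
      intro z hz
      by_contra hzgt
      push_neg at hzgt
      exact absurd (le_trans (hxmono.monotone hzgt.le) hz) (not_le.2 hn₁)
    obtain ⟨m, hm, hmax⟩ :=
      Int.exists_greatest_of_bdd (P := fun z => x z ≤ s) ⟨n₁, hbddset⟩ ⟨n₀, hn₀.le⟩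
    refine ⟨m, hm, ?_⟩
    by_contra hcon
    push_neg at hcon
    have := hmax (m + 1) hcon
    omega
  -- main argument
  intro g hg t
  set s := φ.symm t with hs
  have hts : φ s = t := φ.apply_symm_apply t
  obtain ⟨n, hn1, hn2⟩ := hcov s
  have ht1 := hφIcc n s ⟨hn1, hn2.le⟩
  rw [hts] at ht1
  have hgs_lb : x (n - 1) ≤ g s := le_trans (hg_ge g hg n) (hmono g hg hn1)
  have hgs_ub : g s ≤ x (n + 2) := by
    calc g s ≤ g (x (n + 1)) := hmono g hg hn2.le
      _ ≤ x (n + 1 + 1) := hg_le g hg (n + 1)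
      _ = x (n + 2) := by ring_nf
  have hex : ∃ m : ℤ, n - 1 ≤ m ∧ m ≤ n + 1 ∧ g s ∈ Icc (x m) (x (m + 1)) := by
    rcases le_or_gt (g s) (x n) with h | h
    · exact ⟨n - 1, le_refl _, by omega, hgs_lb, by rwa [sub_add_cancel]⟩
    · rcases le_or_gt (g s) (x (n + 1)) with h' | h'
      · exact ⟨n, by omega, by omega, h.le, h'⟩
      · refine ⟨n + 1, by omega, le_refl _, h'.le, ?_⟩
        have he : (n + 1 + 1 : ℤ) = n + 2 := by ring
        rw [he]
        exact hgs_ub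
  obtain ⟨m, hm1, hm2, hmem⟩ := hex
  have hb := hφIcc m _ hmem
  have hm1' : (n : ℝ) - 1 ≤ (m : ℝ) := by exact_mod_cast hm1
  have hm2' : (m : ℝ) ≤ (n : ℝ) + 1 := by exact_mod_cast hm2
  constructor
  · linarith [hb.1, ht1.2]
  · linarith [hb.2, ht1.1]
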